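/- (Lemma 6, second part: T_GSJ maps V_GSJ into V.) For every v ∈ ℝ^S with T_GSJ v ≤ v, the vector u = T_GSJ v satisfies Tu ≤ u; that is, T_GSJ(V_GSJ) ⊆ V. -/

import Mathlib

noncomputable def Tval {S : Type*} [Fintype S] {A : S → Type*}
    [∀ i, Fintype (A i)] [∀ i, Nonempty (A i)]
    (r : ∀ i, A i → ℝ) (p : ∀ i, A i → S → ℝ) (lam : ℝ) (v : S → ℝ) (i : S) : ℝ :=
  Finset.univ.sup' Finset.univ_nonempty fun a : A i =>
    r i a + lam * ∑ j, p i a j * v j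

noncomputable def TGSJ {S : Type*} [Fintype S] [LinearOrder S] {A : S → Type*}
    [∀ i, Fintype (A i)] [∀ i, Nonempty (A i)]
    (r : ∀ i, A i → ℝ) (p : ∀ i, A i → S → ℝ) (lam : ℝ) (v : S → ℝ) (i : S) : ℝ :=
  Finset.univ.sup' Finset.univ_nonempty fun a : A i =>
    (r i a + lam * (∑ j ∈ (Finset.univ.filter fun j => j < i).attach,
        p i a j.1 * TGSJ r p lam v j.1)
      + lam * ∑ j ∈ Finset.univ.filter fun j => i < j, p i a j * v j) /
      (1 - lam * p i a i)
termination_by (Finset.univ.filter fun j => j < i).card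
decreasing_by
  have hj : j.1 < i := (Finset.mem_filter.mp j.2).2
  apply Finset.card_lt_card
  rw [Finset.ssubset_iff_of_subset]
  · exact ⟨j.1, Finset.mem_filter.mpr ⟨Finset.mem_univ _, hj⟩, by simp⟩
  · intro x hx
    exact Finset.mem_filter.mpr ⟨Finset.mem_univ _, (Finset.mem_filter.mp hx).2.trans hj⟩


lemma sum_split_lt {S : Type*} [Fintype S] [LinearOrder S] (i : S) (f : S → ℝ) :
    ∑ j, f j = (∑ j ∈ Finset.univ.filter fun j => j < i, f j) + f i
      + (∑ j ∈ Finset.univ.filter fun j => i < j, f j) := by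
  have h1 : (Finset.univ.filter fun j : S => ¬ j < i)
      = insert i (Finset.univ.filter fun j => i < j) := by
    ext j
    simp [not_lt, le_iff_eq_or_lt, eq_comm]
  rw [← Finset.sum_filter_add_sum_filter_not Finset.univ (fun j => j < i), h1,
    Finset.sum_insert (by simp)]
  ring

theorem TGSJ_maps_VGSJ_into_V {S : Type*} [Fintype S] [Nonempty S] [LinearOrder S] {A : S → Type*}
    [∀ i, Fintype (A i)] [∀ i, Nonempty (A i)]
    (r : ∀ i, A i → ℝ) (p : ∀ i, A i → S → ℝ) (lam : ℝ)
    (hp : ∀ i (a : A i) (j : S), 0 ≤ p i a j)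
    (hp1 : ∀ i (a : A i), ∑ j, p i a j = 1)
    (hlam0 : 0 ≤ lam) (hlam1 : lam < 1) :
    ∀ v : S → ℝ, (∀ i, TGSJ r p lam v i ≤ v i) →
      ∀ i, Tval r p lam (TGSJ r p lam v) i ≤ TGSJ r p lam v i := by
  intro v hv i
  rw [Tval]
  apply Finset.sup'_le
  intro a _
  have hpii : p i a i ≤ 1 := by
    calc p i a i ≤ ∑ j, p i a j :=
          Finset.single_le_sum (fun j _ => hp i a j) (Finset.mem_univ i)
      _ = 1 := hp1 i a
  have hden : 0 < 1 - lam * p i a i := by nlinarith [hp i a i]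
  have hkey : (r i a + lam * (∑ j ∈ (Finset.univ.filter fun j => j < i).attach,
        p i a j.1 * TGSJ r p lam v j.1)
      + lam * ∑ j ∈ Finset.univ.filter fun j => i < j, p i a j * v j) /
      (1 - lam * p i a i) ≤ TGSJ r p lam v i := by
    conv_rhs => rw [TGSJ]
    apply Finset.le_sup' _ (Finset.mem_univ a)
  rw [div_le_iff₀ hden] at hkey
  rw [Finset.sum_attach _ (fun j => p i a j * TGSJ r p lam v j)] at hkey
  have hsplit := sum_split_lt i (fun j => p i a j * TGSJ r p lam v j)
  have hmono : ∑ j ∈ Finset.univ.filter fun j => i < j, p i a j * TGSJ r p lam v j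
      ≤ ∑ j ∈ Finset.univ.filter fun j => i < j, p i a j * v j :=
    Finset.sum_le_sum fun j _ => mul_le_mul_of_nonneg_left (hv j) (hp i a j)
  nlinarith [hsplit, hmono, hkey]
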